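/- In the three-country icl=3 gadget construction, the Γ-cycles of (G,V) are exactly the following, for each triple t_i=(x,y,z) ∈ T: the seven length-3 international cycles ⟨x,a_i^1,a_i^2⟩, ⟨y,a_i^4,a_i^5⟩, ⟨z,a_i^7,a_i^8⟩, ⟨a_i^1,a_i^2,a_i^3⟩, ⟨a_i^4,a_i^5,a_i^6⟩, ⟨a_i^7,a_i^8,a_i^9⟩, and ⟨a_i^3,a_i^6,a_i^9⟩; in particular, every Γ-cycle is contained within a single gadget. -/

import Mathlib

open scoped Classical

/-- An `n`-partitioned compatibility graph: a finite directed graph on a finite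
set of natural-number vertices, without self-loops, whose vertex set is
partitioned into `n` nonempty countries. -/
structure PartGraph (n : ℕ) where
  verts : Finset ℕ
  arcs : Finset (ℕ × ℕ)
  arcs_mem : ∀ p ∈ arcs, p.1 ∈ verts ∧ p.2 ∈ verts
  no_loops : ∀ v, (v, v) ∉ arcs
  country : ℕ → Fin n
  country_nonempty : ∀ i : Fin n, ∃ v ∈ verts, country v = i

/-- Cyclic access to the entries of a list. -/
def cyc (l : List ℕ) (k : ℕ) : ℕ := l.getD (k % l.length) 0

/-- `l` is a (directed) cycle of `G`: a cyclic sequence of at least two distinct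
vertices, consecutive ones (cyclically) joined by arcs. -/
def IsCycle {n : ℕ} (G : PartGraph n) (l : List ℕ) : Prop :=
  2 ≤ l.length ∧ l.Nodup ∧ (∀ v ∈ l, v ∈ G.verts) ∧
    ∀ k < l.length, (cyc l k, cyc l (k + 1)) ∈ G.arcs

/-- All vertices of `l` belong to country `i`. -/
def IsNationalTo {n : ℕ} (G : PartGraph n) (l : List ℕ) (i : Fin n) : Prop :=
  ∀ v ∈ l, G.country v = i

/-- A national cycle: all vertices in one country. -/
def IsNational {n : ℕ} (G : PartGraph n) (l : List ℕ) : Prop :=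
  ∃ i, IsNationalTo G l i

/-- An international cycle: not national (equivalently, for cycles, it contains
an international arc). -/
def IsInternational {n : ℕ} (G : PartGraph n) (l : List ℕ) : Prop :=
  ¬ IsNational G l

/-- Position `k` (taken cyclically) is the start of a `V_i`-segment of `l`:
the vertex there is in country `i` but the cyclically preceding one is not. -/
def segStart {n : ℕ} (G : PartGraph n) (l : List ℕ) (i : Fin n) (k : ℕ) : Prop :=
  G.country (cyc l k) = i ∧ G.country (cyc l (k + l.length - 1)) ≠ i

/-- The size of the run of consecutive (cyclic) positions of `l`, starting at
position `k`, whose vertices are in country `i`.  At a segment start this is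
exactly the size of that `V_i`-segment. -/
noncomputable def runLen {n : ℕ} (G : PartGraph n) (l : List ℕ) (i : Fin n) (k : ℕ) : ℕ :=
  ((Finset.range l.length).filter
    fun j => ∀ j' ≤ j, G.country (cyc l (k + j')) = i).card

/-- The number of `V_i`-segments of the cycle `l`. -/
noncomputable def numSegs {n : ℕ} (G : PartGraph n) (l : List ℕ) (i : Fin n) : ℕ :=
  ((Finset.range l.length).filter fun k => segStart G l i k).card

/-- A set `Γ` of country-specific parameters for `n` countries. -/
structure Params (n : ℕ) where
  icl : ℕ∞
  ncl : Fin n → ℕ∞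
  iss : Fin n → ℕ∞
  isn : Fin n → ℕ∞
  icl_ne_one : icl ≠ 1
  ncl_ne_one : ∀ i, ncl i ≠ 1
  iss_pos : ∀ i, 1 ≤ iss i
  isn_pos : ∀ i, 1 ≤ isn i

/-- `l` is a `Γ`-cycle of `(G, 𝒱)`. -/
def IsGammaCycle {n : ℕ} (G : PartGraph n) (Γ : Params n) (l : List ℕ) : Prop :=
  IsCycle G l ∧
    ((∃ i, IsNationalTo G l i ∧ (l.length : ℕ∞) ≤ Γ.ncl i) ∨
      (IsInternational G l ∧ (l.length : ℕ∞) ≤ Γ.icl ∧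
        (∀ i, ∀ k < l.length, segStart G l i k → (runLen G l i k : ℕ∞) ≤ Γ.iss i) ∧
        (∀ i, (numSegs G l i : ℕ∞) ≤ Γ.isn i)))

/-- A cycle packing of `G`: a set of pairwise vertex-disjoint cycles. -/
def IsPacking {n : ℕ} (G : PartGraph n) (P : Finset (List ℕ)) : Prop :=
  (∀ l ∈ P, IsCycle G l) ∧
    ∀ l ∈ P, ∀ l' ∈ P, l ≠ l' → ∀ v ∈ l, v ∉ l'

/-- The size of a cycle packing: total number of arcs (= vertices) of its cycles. -/
def packSize (P : Finset (List ℕ)) : ℕ := ∑ l ∈ P, l.length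

/-- A `Γ`-cycle packing of `(G, 𝒱)`. -/
def IsGammaPackingG {n : ℕ} (G : PartGraph n) (Γ : Params n) (P : Finset (List ℕ)) : Prop :=
  IsPacking G P ∧ ∀ l ∈ P, IsGammaCycle G Γ l


/-- The arcs of the three-country `icl = 3` gadget associated with a triple
`t = (x,y,z)`; `a t 0, …, a t 8` are the fresh vertices `a_i^1, …, a_i^9`. -/
def gadgetArcs3 (a : ℕ × ℕ × ℕ → Fin 9 → ℕ) (t : ℕ × ℕ × ℕ) : Finset (ℕ × ℕ) :=
  [(t.1, a t 0), (a t 0, a t 1), (a t 1, t.1), (a t 1, a t 2), (a t 2, a t 0),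
   (t.2.1, a t 3), (a t 3, a t 4), (a t 4, t.2.1), (a t 4, a t 5), (a t 5, a t 3),
   (t.2.2, a t 6), (a t 6, a t 7), (a t 7, t.2.2), (a t 7, a t 8), (a t 8, a t 6),
   (a t 2, a t 5), (a t 5, a t 8), (a t 8, a t 2)].toFinset

/-- The parameters `Γ = (3, 3, (0,0,0), (1,1,1), (1,1,1))`. -/
def gadgetParams3 : Params 3 where
  icl := 3
  ncl := fun _ => 0
  iss := fun _ => 1
  isn := fun _ => 1
  icl_ne_one := by norm_num
  ncl_ne_one := by intro i; norm_num
  iss_pos := fun _ => le_refl _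
  isn_pos := fun _ => le_refl _

/-- In the three-country `icl = 3` gadget construction, the
`Γ`-cycles of `(G, 𝒱)` are exactly, for each triple `tᵢ = (x,y,z) ∈ T`, the
seven length-3 international cycles `⟨x,aᵢ¹,aᵢ²⟩, ⟨y,aᵢ⁴,aᵢ⁵⟩, ⟨z,aᵢ⁷,aᵢ⁸⟩,
⟨aᵢ¹,aᵢ²,aᵢ³⟩, ⟨aᵢ⁴,aᵢ⁵,aᵢ⁶⟩, ⟨aᵢ⁷,aᵢ⁸,aᵢ⁹⟩, ⟨aᵢ³,aᵢ⁶,aᵢ⁹⟩` (cycles as lists up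
to rotation); in particular every `Γ`-cycle is contained within a single
gadget. -/
theorem gadget3_gamma_cycles
    (X Y Z : Finset ℕ) (T : Finset (ℕ × ℕ × ℕ)) (a : ℕ × ℕ × ℕ → Fin 9 → ℕ)
    (hX : X.Nonempty) (hY : Y.Nonempty) (hZ : Z.Nonempty)
    (hXY : Disjoint X Y) (hXZ : Disjoint X Z) (hYZ : Disjoint Y Z)
    (hT : T.Nonempty) (hTsub : ∀ t ∈ T, t.1 ∈ X ∧ t.2.1 ∈ Y ∧ t.2.2 ∈ Z)
    (hfresh : ∀ t ∈ T, ∀ j, a t j ∉ X ∪ Y ∪ Z)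
    (hainj : ∀ t ∈ T, ∀ t' ∈ T, ∀ j j', a t j = a t' j' → t = t' ∧ j = j')
    (G : PartGraph 3)
    (hverts : G.verts = (X ∪ Y ∪ Z) ∪ T.biUnion fun t => Finset.image (a t) Finset.univ)
    (harcs : G.arcs = T.biUnion fun t => gadgetArcs3 a t)
    (hcountry : ∀ v, G.country v =
      if v ∈ Y ∨ ∃ t ∈ T, v = a t 1 ∨ v = a t 5 ∨ v = a t 7 then 1
      else if v ∈ Z ∨ ∃ t ∈ T, v = a t 0 ∨ v = a t 4 ∨ v = a t 8 then 2
      else 0) :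
    ∀ l : List ℕ, IsGammaCycle G gadgetParams3 l ↔
      ∃ t ∈ T,
        l.IsRotated [t.1, a t 0, a t 1] ∨ l.IsRotated [t.2.1, a t 3, a t 4] ∨
        l.IsRotated [t.2.2, a t 6, a t 7] ∨ l.IsRotated [a t 0, a t 1, a t 2] ∨
        l.IsRotated [a t 3, a t 4, a t 5] ∨ l.IsRotated [a t 6, a t 7, a t 8] ∨
        l.IsRotated [a t 2, a t 5, a t 8] := by
  classical
  have hXY' : ∀ u ∈ X, u ∉ Y := fun u hu hv => Finset.disjoint_left.mp hXY hu hv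
  have hXZ' : ∀ u ∈ X, u ∉ Z := fun u hu hv => Finset.disjoint_left.mp hXZ hu hv
  have hYZ' : ∀ u ∈ Y, u ∉ Z := fun u hu hv => Finset.disjoint_left.mp hYZ hu hv
  have haX : ∀ t ∈ T, ∀ (j : Fin 9), ∀ u ∈ X, a t j ≠ u := by
    intro t ht j u hu h
    exact hfresh t ht j (by rw [h]; exact Finset.mem_union_left _ (Finset.mem_union_left _ hu))
  have haY : ∀ t ∈ T, ∀ (j : Fin 9), ∀ u ∈ Y, a t j ≠ u := by
    intro t ht j u hu h
    exact hfresh t ht j (by rw [h]; exact Finset.mem_union_left _ (Finset.mem_union_right _ hu))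
  have haZ : ∀ t ∈ T, ∀ (j : Fin 9), ∀ u ∈ Z, a t j ≠ u := by
    intro t ht j u hu h
    exact hfresh t ht j (by rw [h]; exact Finset.mem_union_right _ hu)
  have haT1 : ∀ t ∈ T, ∀ t' ∈ T, ∀ (j : Fin 9), a t j ≠ t'.1 :=
    fun t ht t' ht' j => haX t ht j _ (hTsub t' ht').1
  have haT2 : ∀ t ∈ T, ∀ t' ∈ T, ∀ (j : Fin 9), a t j ≠ t'.2.1 :=
    fun t ht t' ht' j => haY t ht j _ (hTsub t' ht').2.1
  have haT3 : ∀ t ∈ T, ∀ t' ∈ T, ∀ (j : Fin 9), a t j ≠ t'.2.2 :=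
    fun t ht t' ht' j => haZ t ht j _ (hTsub t' ht').2.2
  have hane : ∀ t ∈ T, ∀ t' ∈ T, ∀ (j j' : Fin 9), j ≠ j' → a t j ≠ a t' j' :=
    fun t ht t' ht' j j' hj h => hj (hainj t ht t' ht' j j' h).2
  have succA : ∀ t ∈ T, ∀ (j : Fin 9) (w : ℕ), (a t j, w) ∈ G.arcs →
      (j = 0 ∧ w = a t 1) ∨ (j = 1 ∧ (w = t.1 ∨ w = a t 2)) ∨
      (j = 2 ∧ (w = a t 0 ∨ w = a t 5)) ∨ (j = 3 ∧ w = a t 4) ∨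
      (j = 4 ∧ (w = t.2.1 ∨ w = a t 5)) ∨ (j = 5 ∧ (w = a t 3 ∨ w = a t 8)) ∨
      (j = 6 ∧ w = a t 7) ∨ (j = 7 ∧ (w = t.2.2 ∨ w = a t 8)) ∨
      (j = 8 ∧ (w = a t 6 ∨ w = a t 2)) := by
    intro t ht j w h
    rw [harcs, Finset.mem_biUnion] at h
    obtain ⟨t', ht', h⟩ := h
    simp only [gadgetArcs3, List.mem_toFinset, List.mem_cons, List.not_mem_nil, or_false,
      Prod.mk.injEq] at h
    rcases h with ⟨h1,h2⟩|⟨h1,h2⟩|⟨h1,h2⟩|⟨h1,h2⟩|⟨h1,h2⟩|⟨h1,h2⟩|⟨h1,h2⟩|⟨h1,h2⟩|⟨h1,h2⟩|⟨h1,h2⟩|⟨h1,h2⟩|⟨h1,h2⟩|⟨h1,h2⟩|⟨h1,h2⟩|⟨h1,h2⟩|⟨h1,h2⟩|⟨h1,h2⟩|⟨h1,h2⟩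
    · exact absurd h1 (haT1 t ht t' ht' j)
    · obtain ⟨rfl, rfl⟩ := hainj t ht t' ht' j 0 h1
      exact Or.inl ⟨rfl, h2⟩
    · obtain ⟨rfl, rfl⟩ := hainj t ht t' ht' j 1 h1
      exact Or.inr (Or.inl ⟨rfl, Or.inl h2⟩)
    · obtain ⟨rfl, rfl⟩ := hainj t ht t' ht' j 1 h1
      exact Or.inr (Or.inl ⟨rfl, Or.inr h2⟩)
    · obtain ⟨rfl, rfl⟩ := hainj t ht t' ht' j 2 h1
      exact Or.inr (Or.inr (Or.inl ⟨rfl, Or.inl h2⟩))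
    · exact absurd h1 (haT2 t ht t' ht' j)
    · obtain ⟨rfl, rfl⟩ := hainj t ht t' ht' j 3 h1
      exact Or.inr (Or.inr (Or.inr (Or.inl ⟨rfl, h2⟩)))
    · obtain ⟨rfl, rfl⟩ := hainj t ht t' ht' j 4 h1
      exact Or.inr (Or.inr (Or.inr (Or.inr (Or.inl ⟨rfl, Or.inl h2⟩))))
    · obtain ⟨rfl, rfl⟩ := hainj t ht t' ht' j 4 h1
      exact Or.inr (Or.inr (Or.inr (Or.inr (Or.inl ⟨rfl, Or.inr h2⟩))))
    · obtain ⟨rfl, rfl⟩ := hainj t ht t' ht' j 5 h1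
      exact Or.inr (Or.inr (Or.inr (Or.inr (Or.inr (Or.inl ⟨rfl, Or.inl h2⟩)))))
    · exact absurd h1 (haT3 t ht t' ht' j)
    · obtain ⟨rfl, rfl⟩ := hainj t ht t' ht' j 6 h1
      exact Or.inr (Or.inr (Or.inr (Or.inr (Or.inr (Or.inr (Or.inl ⟨rfl, h2⟩))))))
    · obtain ⟨rfl, rfl⟩ := hainj t ht t' ht' j 7 h1
      exact Or.inr (Or.inr (Or.inr (Or.inr (Or.inr (Or.inr (Or.inr (Or.inl ⟨rfl, Or.inl h2⟩)))))))
    · obtain ⟨rfl, rfl⟩ := hainj t ht t' ht' j 7 h1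
      exact Or.inr (Or.inr (Or.inr (Or.inr (Or.inr (Or.inr (Or.inr (Or.inl ⟨rfl, Or.inr h2⟩)))))))
    · obtain ⟨rfl, rfl⟩ := hainj t ht t' ht' j 8 h1
      exact Or.inr (Or.inr (Or.inr (Or.inr (Or.inr (Or.inr (Or.inr (Or.inr ⟨rfl, Or.inl h2⟩)))))))
    · obtain ⟨rfl, rfl⟩ := hainj t ht t' ht' j 2 h1
      exact Or.inr (Or.inr (Or.inl ⟨rfl, Or.inr h2⟩))
    · obtain ⟨rfl, rfl⟩ := hainj t ht t' ht' j 5 h1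
      exact Or.inr (Or.inr (Or.inr (Or.inr (Or.inr (Or.inl ⟨rfl, Or.inr h2⟩)))))
    · obtain ⟨rfl, rfl⟩ := hainj t ht t' ht' j 8 h1
      exact Or.inr (Or.inr (Or.inr (Or.inr (Or.inr (Or.inr (Or.inr (Or.inr ⟨rfl, Or.inr h2⟩)))))))
  have succ0 : ∀ t ∈ T, ∀ w, (a t 0, w) ∈ G.arcs → w = a t 1 := by
    intro t ht w h
    rcases succA t ht 0 w h with ⟨_,h2⟩|⟨h1,_⟩|⟨h1,_⟩|⟨h1,_⟩|⟨h1,_⟩|⟨h1,_⟩|⟨h1,_⟩|⟨h1,_⟩|⟨h1,_⟩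
    · exact h2
    all_goals exact absurd h1 (by decide)
  have succ1 : ∀ t ∈ T, ∀ w, (a t 1, w) ∈ G.arcs → w = t.1 ∨ w = a t 2 := by
    intro t ht w h
    rcases succA t ht 1 w h with ⟨h1,_⟩|⟨_,h2⟩|⟨h1,_⟩|⟨h1,_⟩|⟨h1,_⟩|⟨h1,_⟩|⟨h1,_⟩|⟨h1,_⟩|⟨h1,_⟩
    case inr.inl => exact h2
    all_goals exact absurd h1 (by decide)
  have succ2 : ∀ t ∈ T, ∀ w, (a t 2, w) ∈ G.arcs → w = a t 0 ∨ w = a t 5 := by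
    intro t ht w h
    rcases succA t ht 2 w h with ⟨h1,_⟩|⟨h1,_⟩|⟨_,h2⟩|⟨h1,_⟩|⟨h1,_⟩|⟨h1,_⟩|⟨h1,_⟩|⟨h1,_⟩|⟨h1,_⟩
    case inr.inr.inl => exact h2
    all_goals exact absurd h1 (by decide)
  have succ3 : ∀ t ∈ T, ∀ w, (a t 3, w) ∈ G.arcs → w = a t 4 := by
    intro t ht w h
    rcases succA t ht 3 w h with ⟨h1,_⟩|⟨h1,_⟩|⟨h1,_⟩|⟨_,h2⟩|⟨h1,_⟩|⟨h1,_⟩|⟨h1,_⟩|⟨h1,_⟩|⟨h1,_⟩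
    case inr.inr.inr.inl => exact h2
    all_goals exact absurd h1 (by decide)
  have succ4 : ∀ t ∈ T, ∀ w, (a t 4, w) ∈ G.arcs → w = t.2.1 ∨ w = a t 5 := by
    intro t ht w h
    rcases succA t ht 4 w h with ⟨h1,_⟩|⟨h1,_⟩|⟨h1,_⟩|⟨h1,_⟩|⟨_,h2⟩|⟨h1,_⟩|⟨h1,_⟩|⟨h1,_⟩|⟨h1,_⟩
    case inr.inr.inr.inr.inl => exact h2
    all_goals exact absurd h1 (by decide)
  have succ5 : ∀ t ∈ T, ∀ w, (a t 5, w) ∈ G.arcs → w = a t 3 ∨ w = a t 8 := by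
    intro t ht w h
    rcases succA t ht 5 w h with ⟨h1,_⟩|⟨h1,_⟩|⟨h1,_⟩|⟨h1,_⟩|⟨h1,_⟩|⟨_,h2⟩|⟨h1,_⟩|⟨h1,_⟩|⟨h1,_⟩
    case inr.inr.inr.inr.inr.inl => exact h2
    all_goals exact absurd h1 (by decide)
  have succ6 : ∀ t ∈ T, ∀ w, (a t 6, w) ∈ G.arcs → w = a t 7 := by
    intro t ht w h
    rcases succA t ht 6 w h with ⟨h1,_⟩|⟨h1,_⟩|⟨h1,_⟩|⟨h1,_⟩|⟨h1,_⟩|⟨h1,_⟩|⟨_,h2⟩|⟨h1,_⟩|⟨h1,_⟩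
    case inr.inr.inr.inr.inr.inr.inl => exact h2
    all_goals exact absurd h1 (by decide)
  have succ7 : ∀ t ∈ T, ∀ w, (a t 7, w) ∈ G.arcs → w = t.2.2 ∨ w = a t 8 := by
    intro t ht w h
    rcases succA t ht 7 w h with ⟨h1,_⟩|⟨h1,_⟩|⟨h1,_⟩|⟨h1,_⟩|⟨h1,_⟩|⟨h1,_⟩|⟨h1,_⟩|⟨_,h2⟩|⟨h1,_⟩
    case inr.inr.inr.inr.inr.inr.inr.inl => exact h2
    all_goals exact absurd h1 (by decide)
  have succ8 : ∀ t ∈ T, ∀ w, (a t 8, w) ∈ G.arcs → w = a t 6 ∨ w = a t 2 := by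
    intro t ht w h
    rcases succA t ht 8 w h with ⟨h1,_⟩|⟨h1,_⟩|⟨h1,_⟩|⟨h1,_⟩|⟨h1,_⟩|⟨h1,_⟩|⟨h1,_⟩|⟨h1,_⟩|⟨_,h2⟩
    case inr.inr.inr.inr.inr.inr.inr.inr => exact h2
    all_goals exact absurd h1 (by decide)
  have succX : ∀ u ∈ X, ∀ w, (u, w) ∈ G.arcs → ∃ t', t' ∈ T ∧ t'.1 = u ∧ w = a t' 0 := by
    intro u hu w h
    rw [harcs, Finset.mem_biUnion] at h
    obtain ⟨t', ht', h⟩ := h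
    simp only [gadgetArcs3, List.mem_toFinset, List.mem_cons, List.not_mem_nil, or_false,
      Prod.mk.injEq] at h
    rcases h with ⟨h1,h2⟩|⟨h1,h2⟩|⟨h1,h2⟩|⟨h1,h2⟩|⟨h1,h2⟩|⟨h1,h2⟩|⟨h1,h2⟩|⟨h1,h2⟩|⟨h1,h2⟩|⟨h1,h2⟩|⟨h1,h2⟩|⟨h1,h2⟩|⟨h1,h2⟩|⟨h1,h2⟩|⟨h1,h2⟩|⟨h1,h2⟩|⟨h1,h2⟩|⟨h1,h2⟩
    · exact ⟨t', ht', h1.symm, h2⟩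
    all_goals first
      | exact absurd h1.symm (haX t' ht' _ u hu)
      | exact absurd (by rw [h1]; exact (hTsub t' ht').2.1 : u ∈ Y) (hXY' u hu)
      | exact absurd (by rw [h1]; exact (hTsub t' ht').2.2 : u ∈ Z) (hXZ' u hu)
  have succY : ∀ u ∈ Y, ∀ w, (u, w) ∈ G.arcs → ∃ t', t' ∈ T ∧ t'.2.1 = u ∧ w = a t' 3 := by
    intro u hu w h
    rw [harcs, Finset.mem_biUnion] at h
    obtain ⟨t', ht', h⟩ := h
    simp only [gadgetArcs3, List.mem_toFinset, List.mem_cons, List.not_mem_nil, or_false,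
      Prod.mk.injEq] at h
    rcases h with ⟨h1,h2⟩|⟨h1,h2⟩|⟨h1,h2⟩|⟨h1,h2⟩|⟨h1,h2⟩|⟨h1,h2⟩|⟨h1,h2⟩|⟨h1,h2⟩|⟨h1,h2⟩|⟨h1,h2⟩|⟨h1,h2⟩|⟨h1,h2⟩|⟨h1,h2⟩|⟨h1,h2⟩|⟨h1,h2⟩|⟨h1,h2⟩|⟨h1,h2⟩|⟨h1,h2⟩
    case inr.inr.inr.inr.inr.inl => exact ⟨t', ht', h1.symm, h2⟩
    all_goals first
      | exact absurd h1.symm (haY t' ht' _ u hu)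
      | exact absurd (by rw [← h1]; exact hu : t'.1 ∈ Y) (hXY' t'.1 (hTsub t' ht').1)
      | exact absurd (by rw [h1]; exact (hTsub t' ht').2.2 : u ∈ Z) (hYZ' u hu)
  have succZ : ∀ u ∈ Z, ∀ w, (u, w) ∈ G.arcs → ∃ t', t' ∈ T ∧ t'.2.2 = u ∧ w = a t' 6 := by
    intro u hu w h
    rw [harcs, Finset.mem_biUnion] at h
    obtain ⟨t', ht', h⟩ := h
    simp only [gadgetArcs3, List.mem_toFinset, List.mem_cons, List.not_mem_nil, or_false,
      Prod.mk.injEq] at h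
    rcases h with ⟨h1,h2⟩|⟨h1,h2⟩|⟨h1,h2⟩|⟨h1,h2⟩|⟨h1,h2⟩|⟨h1,h2⟩|⟨h1,h2⟩|⟨h1,h2⟩|⟨h1,h2⟩|⟨h1,h2⟩|⟨h1,h2⟩|⟨h1,h2⟩|⟨h1,h2⟩|⟨h1,h2⟩|⟨h1,h2⟩|⟨h1,h2⟩|⟨h1,h2⟩|⟨h1,h2⟩
    case inr.inr.inr.inr.inr.inr.inr.inr.inr.inr.inl => exact ⟨t', ht', h1.symm, h2⟩
    all_goals first
      | exact absurd h1.symm (haZ t' ht' _ u hu)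
      | exact absurd (by rw [← h1]; exact hu : t'.1 ∈ Z) (hXZ' t'.1 (hTsub t' ht').1)
      | exact absurd (by rw [← h1]; exact hu : t'.2.1 ∈ Z) (hYZ' t'.2.1 (hTsub t' ht').2.1)
  intro l
  constructor
  · rintro ⟨hcyc, hor⟩
    have hlen2 := hcyc.1
    have hlen3 : l.length ≤ 3 := by
      rcases hor with ⟨i, _, hle⟩ | ⟨_, hle, _, _⟩
      · exfalso
        simp only [gadgetParams3, nonpos_iff_eq_zero, Nat.cast_eq_zero] at hle
        omega
      · simp only [gadgetParams3] at hle
        exact_mod_cast hle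
    rcases (by omega : l.length = 2 ∨ l.length = 3) with hl2 | hl3
    · exfalso
      obtain ⟨u, v, rfl⟩ := List.length_eq_two.mp hl2
      have e01 := hcyc.2.2.2 0 (by simp)
      have e10 := hcyc.2.2.2 1 (by simp)
      norm_num [cyc] at e01 e10
      rw [harcs, Finset.mem_biUnion] at e01
      obtain ⟨t, ht, e01⟩ := e01
      simp only [gadgetArcs3, List.mem_toFinset, List.mem_cons, List.not_mem_nil, or_false,
        Prod.mk.injEq] at e01
      rcases e01 with ⟨rfl,rfl⟩|⟨rfl,rfl⟩|⟨rfl,rfl⟩|⟨rfl,rfl⟩|⟨rfl,rfl⟩|⟨rfl,rfl⟩|⟨rfl,rfl⟩|⟨rfl,rfl⟩|⟨rfl,rfl⟩|⟨rfl,rfl⟩|⟨rfl,rfl⟩|⟨rfl,rfl⟩|⟨rfl,rfl⟩|⟨rfl,rfl⟩|⟨rfl,rfl⟩|⟨rfl,rfl⟩|⟨rfl,rfl⟩|⟨rfl,rfl⟩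
      · exact haT1 t ht t ht 1 (succ0 t ht _ e10).symm
      · rcases succ1 t ht _ e10 with h | h
        · exact haT1 t ht t ht 0 h
        · exact hane t ht t ht 0 2 (by decide) h
      · obtain ⟨t', ht', -, h⟩ := succX t.1 (hTsub t ht).1 _ e10
        exact hane t ht t' ht' 1 0 (by decide) h
      · rcases succ2 t ht _ e10 with h | h
        · exact hane t ht t ht 1 0 (by decide) h
        · exact hane t ht t ht 1 5 (by decide) h
      · exact hane t ht t ht 2 1 (by decide) (succ0 t ht _ e10)
      · exact haT2 t ht t ht 4 (succ3 t ht _ e10).symm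
      · rcases succ4 t ht _ e10 with h | h
        · exact haT2 t ht t ht 3 h
        · exact hane t ht t ht 3 5 (by decide) h
      · obtain ⟨t', ht', -, h⟩ := succY t.2.1 (hTsub t ht).2.1 _ e10
        exact hane t ht t' ht' 4 3 (by decide) h
      · rcases succ5 t ht _ e10 with h | h
        · exact hane t ht t ht 4 3 (by decide) h
        · exact hane t ht t ht 4 8 (by decide) h
      · exact hane t ht t ht 5 4 (by decide) (succ3 t ht _ e10)
      · exact haT3 t ht t ht 7 (succ6 t ht _ e10).symm
      · rcases succ7 t ht _ e10 with h | h
        · exact haT3 t ht t ht 6 h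
        · exact hane t ht t ht 6 8 (by decide) h
      · obtain ⟨t', ht', -, h⟩ := succZ t.2.2 (hTsub t ht).2.2 _ e10
        exact hane t ht t' ht' 7 6 (by decide) h
      · rcases succ8 t ht _ e10 with h | h
        · exact hane t ht t ht 7 6 (by decide) h
        · exact hane t ht t ht 7 2 (by decide) h
      · exact hane t ht t ht 8 7 (by decide) (succ6 t ht _ e10)
      · rcases succ5 t ht _ e10 with h | h
        · exact hane t ht t ht 2 3 (by decide) h
        · exact hane t ht t ht 2 8 (by decide) h
      · rcases succ8 t ht _ e10 with h | h
        · exact hane t ht t ht 5 6 (by decide) h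
        · exact hane t ht t ht 5 2 (by decide) h
      · rcases succ2 t ht _ e10 with h | h
        · exact hane t ht t ht 8 0 (by decide) h
        · exact hane t ht t ht 8 5 (by decide) h
    · obtain ⟨u, v, w, rfl⟩ := List.length_eq_three.mp hl3
      have e01 := hcyc.2.2.2 0 (by simp)
      have e12 := hcyc.2.2.2 1 (by simp)
      have e20 := hcyc.2.2.2 2 (by simp)
      norm_num [cyc] at e01 e12 e20
      rw [harcs, Finset.mem_biUnion] at e01
      obtain ⟨t, ht, e01⟩ := e01
      simp only [gadgetArcs3, List.mem_toFinset, List.mem_cons, List.not_mem_nil, or_false,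
        Prod.mk.injEq] at e01
      rcases e01 with ⟨rfl,rfl⟩|⟨rfl,rfl⟩|⟨rfl,rfl⟩|⟨rfl,rfl⟩|⟨rfl,rfl⟩|⟨rfl,rfl⟩|⟨rfl,rfl⟩|⟨rfl,rfl⟩|⟨rfl,rfl⟩|⟨rfl,rfl⟩|⟨rfl,rfl⟩|⟨rfl,rfl⟩|⟨rfl,rfl⟩|⟨rfl,rfl⟩|⟨rfl,rfl⟩|⟨rfl,rfl⟩|⟨rfl,rfl⟩|⟨rfl,rfl⟩
      · obtain rfl := succ0 t ht _ e12
        exact ⟨t, ht, Or.inl (List.IsRotated.refl _)⟩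
      · rcases succ1 t ht _ e12 with rfl | rfl
        · exact ⟨t, ht, Or.inl ⟨2, rfl⟩⟩
        · exact ⟨t, ht, Or.inr (Or.inr (Or.inr (Or.inl (List.IsRotated.refl _))))⟩
      · obtain ⟨t', ht', -, rfl⟩ := succX t.1 (hTsub t ht).1 _ e12
        obtain ⟨rfl, -⟩ := hainj t ht t' ht' 1 1 (succ0 t' ht' _ e20)
        exact ⟨t, ht, Or.inl ⟨1, rfl⟩⟩
      · rcases succ2 t ht _ e12 with rfl | rfl
        · exact ⟨t, ht, Or.inr (Or.inr (Or.inr (Or.inl ⟨2, rfl⟩)))⟩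
        · rcases succ5 t ht _ e20 with h | h
          · exact absurd h (hane t ht t ht 1 3 (by decide))
          · exact absurd h (hane t ht t ht 1 8 (by decide))
      · obtain rfl := succ0 t ht _ e12
        exact ⟨t, ht, Or.inr (Or.inr (Or.inr (Or.inl ⟨1, rfl⟩)))⟩
      · obtain rfl := succ3 t ht _ e12
        exact ⟨t, ht, Or.inr (Or.inl (List.IsRotated.refl _))⟩
      · rcases succ4 t ht _ e12 with rfl | rfl
        · exact ⟨t, ht, Or.inr (Or.inl ⟨2, rfl⟩)⟩
        · exact ⟨t, ht, Or.inr (Or.inr (Or.inr (Or.inr (Or.inl (List.IsRotated.refl _)))))⟩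
      · obtain ⟨t', ht', -, rfl⟩ := succY t.2.1 (hTsub t ht).2.1 _ e12
        obtain ⟨rfl, -⟩ := hainj t ht t' ht' 4 4 (succ3 t' ht' _ e20)
        exact ⟨t, ht, Or.inr (Or.inl ⟨1, rfl⟩)⟩
      · rcases succ5 t ht _ e12 with rfl | rfl
        · exact ⟨t, ht, Or.inr (Or.inr (Or.inr (Or.inr (Or.inl ⟨2, rfl⟩))))⟩
        · rcases succ8 t ht _ e20 with h | h
          · exact absurd h (hane t ht t ht 4 6 (by decide))
          · exact absurd h (hane t ht t ht 4 2 (by decide))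
      · obtain rfl := succ3 t ht _ e12
        exact ⟨t, ht, Or.inr (Or.inr (Or.inr (Or.inr (Or.inl ⟨1, rfl⟩))))⟩
      · obtain rfl := succ6 t ht _ e12
        exact ⟨t, ht, Or.inr (Or.inr (Or.inl (List.IsRotated.refl _)))⟩
      · rcases succ7 t ht _ e12 with rfl | rfl
        · exact ⟨t, ht, Or.inr (Or.inr (Or.inl ⟨2, rfl⟩))⟩
        · exact ⟨t, ht, Or.inr (Or.inr (Or.inr (Or.inr (Or.inr (Or.inl (List.IsRotated.refl _))))))⟩
      · obtain ⟨t', ht', -, rfl⟩ := succZ t.2.2 (hTsub t ht).2.2 _ e12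
        obtain ⟨rfl, -⟩ := hainj t ht t' ht' 7 7 (succ6 t' ht' _ e20)
        exact ⟨t, ht, Or.inr (Or.inr (Or.inl ⟨1, rfl⟩))⟩
      · rcases succ8 t ht _ e12 with rfl | rfl
        · exact ⟨t, ht, Or.inr (Or.inr (Or.inr (Or.inr (Or.inr (Or.inl ⟨2, rfl⟩)))))⟩
        · rcases succ2 t ht _ e20 with h | h
          · exact absurd h (hane t ht t ht 7 0 (by decide))
          · exact absurd h (hane t ht t ht 7 5 (by decide))
      · obtain rfl := succ6 t ht _ e12
        exact ⟨t, ht, Or.inr (Or.inr (Or.inr (Or.inr (Or.inr (Or.inl ⟨1, rfl⟩)))))⟩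
      · rcases succ5 t ht _ e12 with rfl | rfl
        · exact absurd (succ3 t ht _ e20) (hane t ht t ht 2 4 (by decide))
        · exact ⟨t, ht, Or.inr (Or.inr (Or.inr (Or.inr (Or.inr (Or.inr (List.IsRotated.refl _))))))⟩
      · rcases succ8 t ht _ e12 with rfl | rfl
        · exact absurd (succ6 t ht _ e20) (hane t ht t ht 5 7 (by decide))
        · exact ⟨t, ht, Or.inr (Or.inr (Or.inr (Or.inr (Or.inr (Or.inr ⟨2, rfl⟩)))))⟩
      · rcases succ2 t ht _ e12 with rfl | rfl
        · exact absurd (succ0 t ht _ e20) (hane t ht t ht 8 1 (by decide))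
        · exact ⟨t, ht, Or.inr (Or.inr (Or.inr (Or.inr (Or.inr (Or.inr ⟨1, rfl⟩)))))⟩
  · rintro ⟨t, ht, hrot⟩
    have rot3 : ∀ (p q r : ℕ) (l' : List ℕ), l'.IsRotated [p,q,r] →
        l' = [p,q,r] ∨ l' = [q,r,p] ∨ l' = [r,p,q] := by
      intro p q r l' h
      obtain ⟨n, rfl⟩ := h.symm
      rw [← List.rotate_mod]
      have h3 : n % ([p,q,r] : List ℕ).length < 3 := Nat.mod_lt _ (by norm_num)
      set m := n % ([p,q,r] : List ℕ).length with hm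
      interval_cases m <;> simp [List.rotate]
    have gamma3 : ∀ p q r : ℕ, (p,q) ∈ G.arcs → (q,r) ∈ G.arcs → (r,p) ∈ G.arcs →
        G.country p ≠ G.country q → G.country q ≠ G.country r → G.country p ≠ G.country r →
        IsGammaCycle G gadgetParams3 [p,q,r] := by
      intro p q r hpq hqr hrp cpq cqr cpr
      have hpq' : p ≠ q := fun h => cpq (by rw [h])
      have hqr' : q ≠ r := fun h => cqr (by rw [h])
      have hpr' : p ≠ r := fun h => cpr (by rw [h])
      constructor
      · refine ⟨by simp, by simp [hpq', hqr', hpr'], ?_, ?_⟩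
        · intro v hv
          simp only [List.mem_cons, List.not_mem_nil, or_false] at hv
          rcases hv with rfl | rfl | rfl
          exacts [(G.arcs_mem _ hpq).1, (G.arcs_mem _ hpq).2, (G.arcs_mem _ hqr).2]
        · intro k hk
          simp only [List.length_cons, List.length_nil] at hk
          interval_cases k <;> norm_num [cyc] <;> assumption
      · refine Or.inr ⟨?_, ?_, ?_, ?_⟩
        · rintro ⟨i, hi⟩
          exact cpq ((hi p (by simp)).trans (hi q (by simp)).symm)
        · norm_num [gadgetParams3]
        · intro i k hk hs
          simp only [List.length_cons, List.length_nil] at hk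
          have hmem0 : ∀ j ∈ (Finset.range ([p,q,r] : List ℕ).length).filter
              (fun j => ∀ j' ≤ j, G.country (cyc [p,q,r] (k+j')) = i), j = 0 := by
            intro j hj
            simp only [Finset.mem_filter, Finset.mem_range, List.length_cons,
              List.length_nil] at hj
            by_contra hj0
            have h0 := hj.2 0 (Nat.zero_le _)
            have h1 := hj.2 1 (by omega)
            rw [Nat.add_zero] at h0
            interval_cases k <;> norm_num [cyc] at h0 h1
            · exact cpq (h0.trans h1.symm)
            · exact cqr (h0.trans h1.symm)
            · exact cpr (h1.trans h0.symm)
          have hcard : runLen G [p,q,r] i k ≤ 1 := by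
            unfold runLen
            exact Finset.card_le_one.mpr fun x hx y hy => (hmem0 x hx).trans (hmem0 y hy).symm
          have h1 : gadgetParams3.iss i = 1 := rfl
          rw [h1]
          exact_mod_cast hcard
        · intro i
          have hcard : numSegs G [p,q,r] i ≤ 1 := by
            unfold numSegs
            refine Finset.card_le_one.mpr fun b hb c hc => ?_
            simp only [Finset.mem_filter, Finset.mem_range, List.length_cons,
              List.length_nil] at hb hc
            have hb1 : G.country (cyc [p,q,r] b) = i := hb.2.1
            have hc1 : G.country (cyc [p,q,r] c) = i := hc.2.1
            have hb3 : b < 3 := hb.1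
            have hc3 : c < 3 := hc.1
            interval_cases b <;> interval_cases c <;> norm_num [cyc] at hb1 hc1 ⊢
            · exact absurd (hb1.trans hc1.symm) cpq
            · exact absurd (hb1.trans hc1.symm) cpr
            · exact absurd (hc1.trans hb1.symm) cpq
            · exact absurd (hb1.trans hc1.symm) cqr
            · exact absurd (hc1.trans hb1.symm) cpr
            · exact absurd (hc1.trans hb1.symm) cqr
          have h1 : gadgetParams3.isn i = 1 := rfl
          rw [h1]
          exact_mod_cast hcard
    -- country computations
    have cx0 : G.country t.1 = 0 := by
      have hu := (hTsub t ht).1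
      rw [hcountry]
      rw [if_neg, if_neg]
      · rintro (h | ⟨t', ht', (h|h|h)⟩)
        · exact hXZ' _ hu h
        all_goals exact haX t' ht' _ _ hu h.symm
      · rintro (h | ⟨t', ht', (h|h|h)⟩)
        · exact hXY' _ hu h
        all_goals exact haX t' ht' _ _ hu h.symm
    have cy1 : G.country t.2.1 = 1 := by
      rw [hcountry, if_pos (Or.inl (hTsub t ht).2.1)]
    have cz2 : G.country t.2.2 = 2 := by
      have hu := (hTsub t ht).2.2
      rw [hcountry]
      rw [if_neg, if_pos (Or.inl hu)]
      rintro (h | ⟨t', ht', (h|h|h)⟩)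
      · exact hYZ' _ h hu
      all_goals exact haZ t' ht' _ _ hu h.symm
    have hn1 : ∀ (j : Fin 9), j ≠ 1 → j ≠ 5 → j ≠ 7 →
        ¬(a t j ∈ Y ∨ ∃ t' ∈ T, a t j = a t' 1 ∨ a t j = a t' 5 ∨ a t j = a t' 7) := by
      intro j hj1 hj5 hj7
      rintro (h | ⟨t', ht', (h|h|h)⟩)
      · exact haY t ht j _ h rfl
      · exact hane t ht t' ht' j 1 hj1 h
      · exact hane t ht t' ht' j 5 hj5 h
      · exact hane t ht t' ht' j 7 hj7 h
    have hn2 : ∀ (j : Fin 9), j ≠ 0 → j ≠ 4 → j ≠ 8 →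
        ¬(a t j ∈ Z ∨ ∃ t' ∈ T, a t j = a t' 0 ∨ a t j = a t' 4 ∨ a t j = a t' 8) := by
      intro j hj0 hj4 hj8
      rintro (h | ⟨t', ht', (h|h|h)⟩)
      · exact haZ t ht j _ h rfl
      · exact hane t ht t' ht' j 0 hj0 h
      · exact hane t ht t' ht' j 4 hj4 h
      · exact hane t ht t' ht' j 8 hj8 h
    have ca1 : G.country (a t 0) = 2 := by
      rw [hcountry, if_neg (hn1 0 (by decide) (by decide) (by decide)),
        if_pos (Or.inr ⟨t, ht, Or.inl rfl⟩)]
    have ca2 : G.country (a t 1) = 1 := by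
      rw [hcountry, if_pos (Or.inr ⟨t, ht, Or.inl rfl⟩)]
    have ca3 : G.country (a t 2) = 0 := by
      rw [hcountry, if_neg (hn1 2 (by decide) (by decide) (by decide)),
        if_neg (hn2 2 (by decide) (by decide) (by decide))]
    have ca4 : G.country (a t 3) = 0 := by
      rw [hcountry, if_neg (hn1 3 (by decide) (by decide) (by decide)),
        if_neg (hn2 3 (by decide) (by decide) (by decide))]
    have ca5 : G.country (a t 4) = 2 := by
      rw [hcountry, if_neg (hn1 4 (by decide) (by decide) (by decide)),
        if_pos (Or.inr ⟨t, ht, Or.inr (Or.inl rfl)⟩)]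
    have ca6 : G.country (a t 5) = 1 := by
      rw [hcountry, if_pos (Or.inr ⟨t, ht, Or.inr (Or.inl rfl)⟩)]
    have ca7 : G.country (a t 6) = 0 := by
      rw [hcountry, if_neg (hn1 6 (by decide) (by decide) (by decide)),
        if_neg (hn2 6 (by decide) (by decide) (by decide))]
    have ca8 : G.country (a t 7) = 1 := by
      rw [hcountry, if_pos (Or.inr ⟨t, ht, Or.inr (Or.inr rfl)⟩)]
    have ca9 : G.country (a t 8) = 2 := by
      rw [hcountry, if_neg (hn1 8 (by decide) (by decide) (by decide)),
        if_pos (Or.inr ⟨t, ht, Or.inr (Or.inr rfl)⟩)]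
    -- the arcs of this gadget
    have harcmem : ∀ p ∈ gadgetArcs3 a t, p ∈ G.arcs := by
      intro p hp; rw [harcs, Finset.mem_biUnion]; exact ⟨t, ht, hp⟩
    have e1 : (t.1, a t 0) ∈ G.arcs := harcmem (t.1, a t 0) (by rw [gadgetArcs3, List.mem_toFinset]; simp only [List.mem_cons]; exact Or.inl trivial)
    have e2 : (a t 0, a t 1) ∈ G.arcs := harcmem (a t 0, a t 1) (by rw [gadgetArcs3, List.mem_toFinset]; simp only [List.mem_cons]; exact Or.inr (Or.inl trivial))
    have e3 : (a t 1, t.1) ∈ G.arcs := harcmem (a t 1, t.1) (by rw [gadgetArcs3, List.mem_toFinset]; simp only [List.mem_cons]; exact Or.inr (Or.inr (Or.inl trivial)))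
    have e4 : (t.2.1, a t 3) ∈ G.arcs := harcmem (t.2.1, a t 3) (by rw [gadgetArcs3, List.mem_toFinset]; simp only [List.mem_cons]; exact Or.inr (Or.inr (Or.inr (Or.inr (Or.inr (Or.inl trivial))))))
    have e5 : (a t 3, a t 4) ∈ G.arcs := harcmem (a t 3, a t 4) (by rw [gadgetArcs3, List.mem_toFinset]; simp only [List.mem_cons]; exact Or.inr (Or.inr (Or.inr (Or.inr (Or.inr (Or.inr (Or.inl trivial)))))))
    have e6 : (a t 4, t.2.1) ∈ G.arcs := harcmem (a t 4, t.2.1) (by rw [gadgetArcs3, List.mem_toFinset]; simp only [List.mem_cons]; exact Or.inr (Or.inr (Or.inr (Or.inr (Or.inr (Or.inr (Or.inr (Or.inl trivial))))))))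
    have e7 : (t.2.2, a t 6) ∈ G.arcs := harcmem (t.2.2, a t 6) (by rw [gadgetArcs3, List.mem_toFinset]; simp only [List.mem_cons]; exact Or.inr (Or.inr (Or.inr (Or.inr (Or.inr (Or.inr (Or.inr (Or.inr (Or.inr (Or.inr (Or.inl trivial)))))))))))
    have e8 : (a t 6, a t 7) ∈ G.arcs := harcmem (a t 6, a t 7) (by rw [gadgetArcs3, List.mem_toFinset]; simp only [List.mem_cons]; exact Or.inr (Or.inr (Or.inr (Or.inr (Or.inr (Or.inr (Or.inr (Or.inr (Or.inr (Or.inr (Or.inr (Or.inl trivial))))))))))))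
    have e9 : (a t 7, t.2.2) ∈ G.arcs := harcmem (a t 7, t.2.2) (by rw [gadgetArcs3, List.mem_toFinset]; simp only [List.mem_cons]; exact Or.inr (Or.inr (Or.inr (Or.inr (Or.inr (Or.inr (Or.inr (Or.inr (Or.inr (Or.inr (Or.inr (Or.inr (Or.inl trivial)))))))))))))
    have e10 : (a t 1, a t 2) ∈ G.arcs := harcmem (a t 1, a t 2) (by rw [gadgetArcs3, List.mem_toFinset]; simp only [List.mem_cons]; exact Or.inr (Or.inr (Or.inr (Or.inl trivial))))
    have e11 : (a t 2, a t 0) ∈ G.arcs := harcmem (a t 2, a t 0) (by rw [gadgetArcs3, List.mem_toFinset]; simp only [List.mem_cons]; exact Or.inr (Or.inr (Or.inr (Or.inr (Or.inl trivial)))))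
    have e12 : (a t 4, a t 5) ∈ G.arcs := harcmem (a t 4, a t 5) (by rw [gadgetArcs3, List.mem_toFinset]; simp only [List.mem_cons]; exact Or.inr (Or.inr (Or.inr (Or.inr (Or.inr (Or.inr (Or.inr (Or.inr (Or.inl trivial)))))))))
    have e13 : (a t 5, a t 3) ∈ G.arcs := harcmem (a t 5, a t 3) (by rw [gadgetArcs3, List.mem_toFinset]; simp only [List.mem_cons]; exact Or.inr (Or.inr (Or.inr (Or.inr (Or.inr (Or.inr (Or.inr (Or.inr (Or.inr (Or.inl trivial))))))))))
    have e14 : (a t 7, a t 8) ∈ G.arcs := harcmem (a t 7, a t 8) (by rw [gadgetArcs3, List.mem_toFinset]; simp only [List.mem_cons]; exact Or.inr (Or.inr (Or.inr (Or.inr (Or.inr (Or.inr (Or.inr (Or.inr (Or.inr (Or.inr (Or.inr (Or.inr (Or.inr (Or.inl trivial))))))))))))))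
    have e15 : (a t 8, a t 6) ∈ G.arcs := harcmem (a t 8, a t 6) (by rw [gadgetArcs3, List.mem_toFinset]; simp only [List.mem_cons]; exact Or.inr (Or.inr (Or.inr (Or.inr (Or.inr (Or.inr (Or.inr (Or.inr (Or.inr (Or.inr (Or.inr (Or.inr (Or.inr (Or.inr (Or.inl trivial)))))))))))))))
    have e16 : (a t 2, a t 5) ∈ G.arcs := harcmem (a t 2, a t 5) (by rw [gadgetArcs3, List.mem_toFinset]; simp only [List.mem_cons]; exact Or.inr (Or.inr (Or.inr (Or.inr (Or.inr (Or.inr (Or.inr (Or.inr (Or.inr (Or.inr (Or.inr (Or.inr (Or.inr (Or.inr (Or.inr (Or.inl trivial))))))))))))))))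
    have e17 : (a t 5, a t 8) ∈ G.arcs := harcmem (a t 5, a t 8) (by rw [gadgetArcs3, List.mem_toFinset]; simp only [List.mem_cons]; exact Or.inr (Or.inr (Or.inr (Or.inr (Or.inr (Or.inr (Or.inr (Or.inr (Or.inr (Or.inr (Or.inr (Or.inr (Or.inr (Or.inr (Or.inr (Or.inr (Or.inl trivial)))))))))))))))))
    have e18 : (a t 8, a t 2) ∈ G.arcs := harcmem (a t 8, a t 2) (by rw [gadgetArcs3, List.mem_toFinset]; simp only [List.mem_cons]; exact Or.inr (Or.inr (Or.inr (Or.inr (Or.inr (Or.inr (Or.inr (Or.inr (Or.inr (Or.inr (Or.inr (Or.inr (Or.inr (Or.inr (Or.inr (Or.inr (Or.inr (Or.inl trivial))))))))))))))))))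
    rcases hrot with h|h|h|h|h|h|h
    · rcases rot3 _ _ _ _ h with rfl|rfl|rfl
      · exact gamma3 _ _ _ e1 e2 e3 (by rw [cx0, ca1]; decide) (by rw [ca1, ca2]; decide)
          (by rw [cx0, ca2]; decide)
      · exact gamma3 _ _ _ e2 e3 e1 (by rw [ca1, ca2]; decide) (by rw [ca2, cx0]; decide)
          (by rw [ca1, cx0]; decide)
      · exact gamma3 _ _ _ e3 e1 e2 (by rw [ca2, cx0]; decide) (by rw [cx0, ca1]; decide)
          (by rw [ca2, ca1]; decide)
    · rcases rot3 _ _ _ _ h with rfl|rfl|rfl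
      · exact gamma3 _ _ _ e4 e5 e6 (by rw [cy1, ca4]; decide) (by rw [ca4, ca5]; decide)
          (by rw [cy1, ca5]; decide)
      · exact gamma3 _ _ _ e5 e6 e4 (by rw [ca4, ca5]; decide) (by rw [ca5, cy1]; decide)
          (by rw [ca4, cy1]; decide)
      · exact gamma3 _ _ _ e6 e4 e5 (by rw [ca5, cy1]; decide) (by rw [cy1, ca4]; decide)
          (by rw [ca5, ca4]; decide)
    · rcases rot3 _ _ _ _ h with rfl|rfl|rfl
      · exact gamma3 _ _ _ e7 e8 e9 (by rw [cz2, ca7]; decide) (by rw [ca7, ca8]; decide)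
          (by rw [cz2, ca8]; decide)
      · exact gamma3 _ _ _ e8 e9 e7 (by rw [ca7, ca8]; decide) (by rw [ca8, cz2]; decide)
          (by rw [ca7, cz2]; decide)
      · exact gamma3 _ _ _ e9 e7 e8 (by rw [ca8, cz2]; decide) (by rw [cz2, ca7]; decide)
          (by rw [ca8, ca7]; decide)
    · rcases rot3 _ _ _ _ h with rfl|rfl|rfl
      · exact gamma3 _ _ _ e2 e10 e11 (by rw [ca1, ca2]; decide) (by rw [ca2, ca3]; decide)
          (by rw [ca1, ca3]; decide)
      · exact gamma3 _ _ _ e10 e11 e2 (by rw [ca2, ca3]; decide) (by rw [ca3, ca1]; decide)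
          (by rw [ca2, ca1]; decide)
      · exact gamma3 _ _ _ e11 e2 e10 (by rw [ca3, ca1]; decide) (by rw [ca1, ca2]; decide)
          (by rw [ca3, ca2]; decide)
    · rcases rot3 _ _ _ _ h with rfl|rfl|rfl
      · exact gamma3 _ _ _ e5 e12 e13 (by rw [ca4, ca5]; decide) (by rw [ca5, ca6]; decide)
          (by rw [ca4, ca6]; decide)
      · exact gamma3 _ _ _ e12 e13 e5 (by rw [ca5, ca6]; decide) (by rw [ca6, ca4]; decide)
          (by rw [ca5, ca4]; decide)
      · exact gamma3 _ _ _ e13 e5 e12 (by rw [ca6, ca4]; decide) (by rw [ca4, ca5]; decide)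
          (by rw [ca6, ca5]; decide)
    · rcases rot3 _ _ _ _ h with rfl|rfl|rfl
      · exact gamma3 _ _ _ e8 e14 e15 (by rw [ca7, ca8]; decide) (by rw [ca8, ca9]; decide)
          (by rw [ca7, ca9]; decide)
      · exact gamma3 _ _ _ e14 e15 e8 (by rw [ca8, ca9]; decide) (by rw [ca9, ca7]; decide)
          (by rw [ca8, ca7]; decide)
      · exact gamma3 _ _ _ e15 e8 e14 (by rw [ca9, ca7]; decide) (by rw [ca7, ca8]; decide)
          (by rw [ca9, ca8]; decide)
    · rcases rot3 _ _ _ _ h with rfl|rfl|rfl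
      · exact gamma3 _ _ _ e16 e17 e18 (by rw [ca3, ca6]; decide) (by rw [ca6, ca9]; decide)
          (by rw [ca3, ca9]; decide)
      · exact gamma3 _ _ _ e17 e18 e16 (by rw [ca6, ca9]; decide) (by rw [ca9, ca3]; decide)
          (by rw [ca6, ca3]; decide)
      · exact gamma3 _ _ _ e18 e16 e17 (by rw [ca9, ca3]; decide) (by rw [ca3, ca6]; decide)
          (by rw [ca9, ca6]; decide)
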